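/- For every integer k ≥ 2, the central binomial coefficient satisfies C(k, ⌊k/2⌋) ≤ 2^k·√(2·e^{1/6}/(π·(k−1))). -/

import Mathlib

open Real Stirling Filter Topology Nat

lemma sqrt_pi_le_stirlingSeq (n : ℕ) (hn : n ≠ 0) : √π ≤ stirlingSeq n := by
  obtain ⟨m, rfl⟩ := Nat.exists_eq_succ_of_ne_zero hn
  have h : Tendsto (stirlingSeq ∘ Nat.succ) atTop (𝓝 (√π)) :=
    tendsto_stirlingSeq_sqrt_pi.comp (tendsto_add_atTop_nat 1)
  exact stirlingSeq'_antitone.le_of_tendsto h m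

lemma factorial_eq_stirling (m : ℕ) (hm : m ≠ 0) :
    (m ! : ℝ) = stirlingSeq m * (√(2 * m) * (m / exp 1) ^ m) := by
  have hm' : (0:ℝ) < m := by exact_mod_cast Nat.pos_of_ne_zero hm
  have h : √(2 * (m:ℝ)) * ((m:ℝ) / exp 1) ^ m ≠ 0 := by positivity
  rw [stirlingSeq, div_mul_cancel₀ _ h]

lemma centralBinom_key (n : ℕ) (hn : n ≠ 0) :
    (Nat.centralBinom n : ℝ) * √(π * n) ≤ 4 ^ n := by
  have hnpos : (0:ℝ) < n := by exact_mod_cast Nat.pos_of_ne_zero hn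
  set C : ℝ := (Nat.centralBinom n : ℝ) with hC
  set s := stirlingSeq with hs
  set P : ℝ := ((n:ℝ) / exp 1) ^ n with hP
  have hPpos : 0 < P := by positivity
  have hfac : C * ((n ! : ℝ) * (n ! : ℝ)) = ((2 * n)! : ℝ) := by
    rw [hC]
    norm_cast
    rw [Nat.centralBinom_eq_two_mul_choose, ← mul_assoc]
    have := Nat.choose_mul_factorial_mul_factorial (show n ≤ 2 * n by omega)
    rwa [show 2 * n - n = n by omega] at this
  have e1 : (n ! : ℝ) = s n * (√(2 * n) * P) := factorial_eq_stirling n hn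
  have e2 : ((2*n)! : ℝ) = s (2*n) * (√(2 * (2*n)) * ((2*(n:ℝ)) / exp 1) ^ (2*n)) := by
    have := factorial_eq_stirling (2*n) (by omega)
    rw [this, hs]; push_cast; ring_nf
  have h2 : (√(2 * (n:ℝ)))^2 = 2 * n := Real.sq_sqrt (by positivity)
  have h3 : √(n:ℝ) * √(n:ℝ) = n := Real.mul_self_sqrt n.cast_nonneg
  have h4 : √(2 * (2*(n:ℝ))) = 2 * √n := by
    rw [show 2 * (2*(n:ℝ)) = 4 * n by ring, Real.sqrt_mul (by norm_num),
      show (4:ℝ) = 2^2 by norm_num, Real.sqrt_sq (by norm_num)]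
  have h5 : ((2*(n:ℝ)) / exp 1) ^ (2*n) = 4 ^ n * P^2 := by
    rw [show (2*(n:ℝ)) / exp 1 = 2 * ((n:ℝ)/exp 1) by ring, mul_pow, hP,
      show (2:ℝ)^(2*n) = 4^n by rw [pow_mul]; norm_num,
      mul_comm 2 n, pow_mul]
  have lhs_eq : C * s n ^ 2 * √n * (2 * √n * P ^ 2) = ((2*n)! : ℝ) := by
    rw [← hfac, e1]
    linear_combination 2*C*(s n)^2*P^2*h3 - C*(s n)^2*P^2*h2
  have rhs_eq : s (2*n) * 4 ^ n * (2 * √n * P ^ 2) = ((2*n)! : ℝ) := by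
    rw [e2, h4, h5]; push_cast; ring
  have hne : (2 * √(n:ℝ) * P ^ 2) ≠ 0 := by positivity
  have key : C * s n ^ 2 * √n = s (2*n) * 4 ^ n :=
    mul_right_cancel₀ hne (lhs_eq.trans rhs_eq.symm)
  have hsn : √π ≤ s n := sqrt_pi_le_stirlingSeq n hn
  have hs2n : s (2*n) ≤ s n := by
    obtain ⟨m, rfl⟩ := Nat.exists_eq_succ_of_ne_zero hn
    have := stirlingSeq'_antitone (show m ≤ 2*m+1 by omega)
    simpa [Function.comp, Nat.succ_eq_add_one, show 2*(m+1) = 2*m+1+1 by ring] using this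
  have hsnpos : 0 < s n := lt_of_lt_of_le (Real.sqrt_pos.mpr pi_pos) hsn
  have hCnn : 0 ≤ C := by rw [hC]; positivity
  have : C * √(π * n) * s n ^ 2 ≤ 4 ^ n * s n ^ 2 := by
    calc C * √(π * n) * s n ^ 2 = √π * (C * s n ^ 2 * √n) := by
          rw [Real.sqrt_mul pi_pos.le]; ring
      _ = √π * s (2*n) * 4 ^ n := by rw [key]; ring
      _ ≤ (s n * s n) * 4 ^ n := by
          have h0 : 0 < s (2*n) := lt_of_lt_of_le (Real.sqrt_pos.mpr pi_pos)
            (sqrt_pi_le_stirlingSeq (2*n) (by omega))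
          have := mul_le_mul hsn hs2n h0.le hsnpos.le
          nlinarith [pow_pos (show (0:ℝ) < 4 by norm_num) n]
      _ = 4 ^ n * s n ^ 2 := by ring
  exact le_of_mul_le_mul_right this (by positivity)

theorem central_binom_upper (k : ℕ) (hk : 2 ≤ k) :
    (k.choose (k / 2) : ℝ) ≤ 2 ^ k * Real.sqrt (2 * Real.exp (1 / 6) / (Real.pi * (k - 1 : ℝ))) := by
  have hexp : (1:ℝ) ≤ exp (1/6) := Real.one_le_exp (by norm_num)
  rcases Nat.even_or_odd k with ⟨m, hm⟩ | ⟨m, hm⟩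
  · -- k = 2m
    have hm1 : 1 ≤ m := by omega
    have hmpos : (0:ℝ) < m := by exact_mod_cast hm1
    have hkd : k / 2 = m := by omega
    have hch : k.choose (k/2) = Nat.centralBinom m := by
      rw [hkd, Nat.centralBinom_eq_two_mul_choose, show k = 2*m by omega]
    have hkey := centralBinom_key m (by omega)
    have hsq : (0:ℝ) < √(π * m) := Real.sqrt_pos.mpr (by positivity)
    have h1 : (Nat.centralBinom m : ℝ) ≤ 4 ^ m / √(π * m) :=
      (le_div_iff₀ hsq).mpr hkey
    rw [hch]
    refine h1.trans ?_
    have h4 : (4:ℝ)^m = 2^k := by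
      rw [show k = 2*m by omega, pow_mul]; norm_num
    rw [div_eq_mul_inv, h4, ← Real.sqrt_inv]
    gcongr 2^k * ?_
    apply Real.sqrt_le_sqrt
    rw [inv_eq_one_div]
    have hk1 : (0:ℝ) < (k:ℝ) - 1 := by
      have : (2:ℝ) ≤ k := by exact_mod_cast hk
      linarith
    rw [div_le_div_iff₀ (by positivity) (by positivity)]
    have hkm : (k:ℝ) = 2*m := by exact_mod_cast congrArg Nat.cast (show k = 2*m by omega)
    have hpm : (0:ℝ) < π * m := by positivity
    have hA : π * ((k:ℝ) - 1) ≤ 2 * (π * m) := by rw [hkm]; nlinarith [pi_pos]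
    have hB : 2 * (π * (m:ℝ)) ≤ 2 * exp (1/6) * (π * m) := by nlinarith [hpm]
    linarith
  · -- k = 2m+1
    have hm1 : 1 ≤ m := by omega
    have hmpos : (0:ℝ) < m := by exact_mod_cast hm1
    have hkd : k / 2 = m := by omega
    have hch : 2 * k.choose (k/2) = Nat.centralBinom (m+1) := by
      rw [hkd, Nat.centralBinom_eq_two_mul_choose, show 2*(m+1) = (2*m+1)+1 by ring,
        show k = 2*m+1 by omega, Nat.choose_succ_succ, Nat.choose_symm_half, two_mul]
    have hkey := centralBinom_key (m+1) (by omega)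
    have hsq : (0:ℝ) < √(π * (m+1)) := Real.sqrt_pos.mpr (by positivity)
    have h1 : (Nat.centralBinom (m+1) : ℝ) ≤ 4 ^ (m+1) / √(π * (m+1)) :=
      (le_div_iff₀ hsq).mpr (by exact_mod_cast hkey)
    have hchR : 2 * (k.choose (k/2) : ℝ) = (Nat.centralBinom (m+1) : ℝ) := by
      exact_mod_cast hch
    have h2 : (k.choose (k/2) : ℝ) = (Nat.centralBinom (m+1) : ℝ) / 2 := by linarith
    rw [h2]
    have h3 : (Nat.centralBinom (m+1) : ℝ) / 2 ≤ 2^k / √(π * (m+1)) := by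
      have h4 : (4:ℝ)^(m+1) / 2 = 2^k := by
        rw [show k = 2*m+1 by omega, show (4:ℝ) = 2^2 by norm_num, ← pow_mul]
        rw [show 2*(m+1) = (2*m+1)+1 by ring, pow_succ]
        ring
      calc (Nat.centralBinom (m+1) : ℝ) / 2 ≤ (4 ^ (m+1) / √(π * (m+1))) / 2 := by
            gcongr
        _ = 2^k / √(π * (m+1)) := by rw [← h4]; ring
    refine h3.trans ?_
    rw [div_eq_mul_inv, ← Real.sqrt_inv]
    gcongr 2^k * ?_
    apply Real.sqrt_le_sqrt
    rw [inv_eq_one_div]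
    have hk1 : (0:ℝ) < (k:ℝ) - 1 := by
      have : (2:ℝ) ≤ k := by exact_mod_cast hk
      linarith
    rw [div_le_div_iff₀ (by positivity) (by positivity)]
    have hkm : (k:ℝ) = 2*m+1 := by exact_mod_cast congrArg Nat.cast (show k = 2*m+1 by omega)
    have hpm : (0:ℝ) < π * ((m:ℝ)+1) := by positivity
    have hA : π * ((k:ℝ) - 1) ≤ 2 * (π * ((m:ℝ)+1)) := by rw [hkm]; nlinarith [pi_pos]
    have hB : 2 * (π * ((m:ℝ)+1)) ≤ 2 * exp (1/6) * (π * ((m:ℝ)+1)) := by nlinarith [hpm]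
    linarith
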